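/- Let A be an associative algebra over a field k of characteristic p > 2 with lower central series A_{(k)} (A_{(1)} = A, A_{(k)} = [A, A_{(k-1)}]). If A_{(p)} = 0 and every element of A_{(2)} has vanishing p-th power, then for all x, y ∈ A one has (xy)^p = x^p y^p. -/

import Mathlib

/-- The lower central series of an associative `k`-algebra with respect to the
commutator: `lcs k A 1 = A`, and `lcs k A (n+1)` is the `k`-linear span of
commutators `[a, c] = a*c - c*a` with `a ∈ A` and `c ∈ lcs k A n`. -/
def lcs (k A : Type*) [Field k] [Ring A] [Algebra k A] : ℕ → Submodule k A
  | 0 => ⊤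
  | 1 => ⊤
  | (n + 2) =>
      Submodule.span k {z : A | ∃ a c : A, c ∈ lcs k A (n + 1) ∧ z = a * c - c * a}

section Aux

variable {k : Type*} [Field k] {p : ℕ}

lemma choose_cast_eq (hp : p.Prime) [CharP k p] :
    ∀ j, j ≤ p - 1 → (((p - 1).choose j : ℕ) : k) = (-1 : k) ^ j := by
  intro j
  induction j with
  | zero => simp
  | succ j ih =>
    intro hj
    have hj' : j ≤ p - 1 := le_of_lt (Nat.lt_of_lt_of_le (Nat.lt_succ_self j) hj)
    have key := Nat.choose_succ_right_eq (p - 1) j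
    have hcast : (((p - 1).choose (j + 1) * (j + 1) : ℕ) : k)
        = (((p - 1).choose j * ((p - 1) - j) : ℕ) : k) := by rw [key]
    have hjle : j ≤ p - 1 := hj'
    have hsub : (((p - 1) - j : ℕ) : k) = -(j + 1 : k) := by
      rw [Nat.cast_sub hjle, Nat.cast_sub (Nat.one_le_iff_ne_zero.mpr hp.pos.ne')]
      have : ((p : ℕ) : k) = 0 := CharP.cast_eq_zero k p
      rw [this]; ring
    rw [Nat.cast_mul, Nat.cast_mul, ih hj', hsub] at hcast
    have hne : ((j : k) + 1) ≠ 0 := by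
      have hnd : ¬ (p ∣ (j + 1)) := by
        intro hdvd
        have := Nat.le_of_dvd (Nat.succ_pos j) hdvd
        omega
      have := (not_iff_not.mpr (CharP.cast_eq_zero_iff k p (j+1))).mpr hnd
      push_cast at this
      exact this
    push_cast at hcast
    apply mul_right_cancel₀ hne
    rw [hcast]; push_cast; ring
end Aux

section OpAux

variable {k : Type*} [Field k] {p : ℕ} {S : Type*} [Ring S] [Algebra k S]

open LinearMap Finset

lemma sum_conj_eq (hp : p.Prime) (hp2 : 2 < p) [CharP k p] (u z : S) :
    ∑ j ∈ Finset.range p, u ^ j * z * u ^ (p - 1 - j)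
      = ((LinearMap.mulLeft k u - LinearMap.mulRight k u) ^ (p - 1)) z := by
  have hc : Commute (LinearMap.mulLeft k u) (-(LinearMap.mulRight k u)) :=
    (LinearMap.commute_mulLeft_right (R := k) u u).neg_right
  have hpeven : Even (p - 1) := Nat.Odd.sub_odd (hp.odd_of_ne_two (by omega)) odd_one
  have hbin := hc.add_pow (p - 1)
  rw [← sub_eq_add_neg] at hbin
  have hrange : p - 1 + 1 = p := Nat.succ_pred_eq_of_pos hp.pos
  rw [hrange] at hbin
  have hterm : ∀ m ∈ Finset.range p,
      (mulLeft k u) ^ m * (-(mulRight k u)) ^ (p - 1 - m) * (((p - 1).choose m : ℕ) :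
        Module.End k S)
      = (mulLeft k u) ^ m * (mulRight k u) ^ (p - 1 - m) := by
    intro m hm
    have hm' : m ≤ p - 1 := by
      have := Finset.mem_range.mp hm; omega
    have hcast : (((p - 1).choose m : ℕ) : Module.End k S) = ((-1 : Module.End k S)) ^ m := by
      calc (((p - 1).choose m : ℕ) : Module.End k S)
          = algebraMap k _ (((p - 1).choose m : ℕ) : k) := (map_natCast _ _).symm
        _ = algebraMap k _ ((-1 : k) ^ m) := by rw [choose_cast_eq hp m hm']
        _ = ((-1 : Module.End k S)) ^ m := by rw [map_pow, map_neg, map_one]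
    rw [hcast, neg_pow (R := Module.End k S)]
    have hcomm : ((-1 : Module.End k S)) ^ (p - 1 - m) * (mulRight k u) ^ (p - 1 - m)
        * (-1 : Module.End k S) ^ m
        = (mulRight k u) ^ (p - 1 - m) * ((-1 : Module.End k S)) ^ (p - 1) := by
      have h1 : Commute ((-1 : Module.End k S) ^ (p - 1 - m)) ((mulRight k u) ^ (p - 1 - m)) :=
        ((Commute.neg_one_left (R := Module.End k S) _).pow_pow _ _)
      rw [h1.eq, mul_assoc, ← pow_add]
      congr 2
      omega
    calc (mulLeft k u) ^ m * ((-1 : Module.End k S) ^ (p - 1 - m) *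
          (mulRight k u) ^ (p - 1 - m)) * (-1 : Module.End k S) ^ m
        = (mulLeft k u) ^ m * ((-1 : Module.End k S) ^ (p - 1 - m) *
          (mulRight k u) ^ (p - 1 - m) * (-1 : Module.End k S) ^ m) := by
          rw [mul_assoc]
      _ = (mulLeft k u) ^ m * ((mulRight k u) ^ (p - 1 - m) *
            ((-1 : Module.End k S)) ^ (p - 1)) := by rw [hcomm]
      _ = (mulLeft k u) ^ m * (mulRight k u) ^ (p - 1 - m) := by
          rw [hpeven.neg_one_pow (α := Module.End k S), mul_one]
  rw [Finset.sum_congr rfl hterm] at hbin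
  rw [hbin]
  rw [LinearMap.sum_apply]
  refine Finset.sum_congr rfl ?_
  intro m hm
  rw [Module.End.mul_apply, LinearMap.pow_mulLeft, LinearMap.pow_mulRight,
    LinearMap.mulLeft_apply, LinearMap.mulRight_apply, mul_assoc]

lemma lr_pow_p (hp : p.Prime) (hp2 : 2 < p) [CharP k p] (u z : S) :
    ((LinearMap.mulLeft k u - LinearMap.mulRight k u) ^ p) z = u ^ p * z - z * u ^ p := by
  have hc : Commute (LinearMap.mulLeft k u) (-(LinearMap.mulRight k u)) :=
    (LinearMap.commute_mulLeft_right (R := k) u u).neg_right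
  have hbin := hc.add_pow p
  rw [← sub_eq_add_neg] at hbin
  have hodd : Odd p := hp.odd_of_ne_two (by omega)
  have hterm : ∀ m ∈ Finset.range (p + 1),
      (mulLeft k u) ^ m * (-(mulRight k u)) ^ (p - m) * ((p.choose m : ℕ) : Module.End k S)
      = if m = 0 then -((mulRight k u) ^ p) else if m = p then (mulLeft k u) ^ p else 0 := by
    intro m hm
    rcases eq_or_ne m 0 with rfl | hm0
    · simp [hodd.neg_pow (α := Module.End k S)]
    rcases eq_or_ne m p with rfl | hmp
    · simp [hm0]
    · have hmlt : m < p := by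
        have := Finset.mem_range.mp hm; omega
      have hdvd : p ∣ p.choose m := Nat.Prime.dvd_choose_self hp hm0 hmlt
      have hzero : ((p.choose m : ℕ) : Module.End k S) = 0 := by
        calc ((p.choose m : ℕ) : Module.End k S)
            = algebraMap k _ ((p.choose m : ℕ) : k) := (map_natCast _ _).symm
          _ = algebraMap k _ 0 := by
              rw [(CharP.cast_eq_zero_iff k p _).mpr hdvd]
          _ = 0 := map_zero _
      simp [hm0, hmp, hzero]
  rw [Finset.sum_congr rfl hterm] at hbin
  have hsum : ∑ x ∈ Finset.range (p + 1),
      (if x = 0 then -((mulRight k u) ^ p) else if x = p then (mulLeft k u) ^ p else 0)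
      = -((mulRight k u) ^ p) + (mulLeft k u) ^ p := by
    have hsplit : ∀ x ∈ Finset.range (p + 1),
        (if x = 0 then -((mulRight k u) ^ p) else if x = p then (mulLeft k u) ^ p else 0)
        = (if x = 0 then -((mulRight k u) ^ p) else 0)
          + (if x = p then (mulLeft k u) ^ p else 0) := by
      intro x _
      rcases eq_or_ne x 0 with rfl | hx0
      · rw [if_pos rfl, if_pos rfl, if_neg (by omega : ¬ (0:ℕ) = p), add_zero]
      · simp [hx0]
    rw [Finset.sum_congr rfl hsplit, Finset.sum_add_distrib,
      Finset.sum_ite_eq' (Finset.range (p + 1)) 0,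
      Finset.sum_ite_eq' (Finset.range (p + 1)) p]
    simp
  rw [hsum] at hbin
  rw [hbin]
  simp only [LinearMap.add_apply, LinearMap.neg_apply, LinearMap.pow_mulLeft,
    LinearMap.pow_mulRight, LinearMap.mulLeft_apply, LinearMap.mulRight_apply]
  exact neg_add_eq_sub _ _

end OpAux

section MainAux

variable {k A : Type*} [Field k] [Ring A] [Algebra k A]

open LinearMap Polynomial Finset

lemma lcs_one : lcs k A 1 = ⊤ := rfl

lemma lcs_succ_succ (n : ℕ) : lcs k A (n + 2)
    = Submodule.span k {z : A | ∃ a c : A, c ∈ lcs k A (n + 1) ∧ z = a * c - c * a} := rfl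

lemma bracket_mem (u c : A) (n : ℕ) (hc : c ∈ lcs k A (n + 1)) :
    u * c - c * u ∈ lcs k A (n + 2) := by
  rw [lcs_succ_succ]
  exact Submodule.subset_span ⟨u, c, hc, rfl⟩

lemma iter_mem (u z : A) : ∀ n : ℕ, ((mulLeft k u - mulRight k u) ^ n) z ∈ lcs k A (n + 1)
  | 0 => by
      rw [pow_zero, Module.End.one_apply, lcs_one]
      exact Submodule.mem_top
  | (n + 1) => by
      rw [pow_succ', Module.End.mul_apply]
      simp only [LinearMap.sub_apply, mulLeft_apply, mulRight_apply]
      exact bracket_mem _ _ n (iter_mem u z n)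

lemma coeff_comm_mem {m : ℕ} (u v : A[X]) (hv : ∀ i, v.coeff i ∈ lcs k A (m + 1)) (n : ℕ) :
    (u * v - v * u).coeff n ∈ lcs k A (m + 2) := by
  rw [Polynomial.coeff_sub, Polynomial.coeff_mul, Polynomial.coeff_mul]
  have hswap : ∑ x ∈ Finset.HasAntidiagonal.antidiagonal n, v.coeff x.1 * u.coeff x.2
      = ∑ x ∈ Finset.HasAntidiagonal.antidiagonal n, v.coeff x.2 * u.coeff x.1 := by
    conv_lhs => rw [← Finset.HasAntidiagonal.map_swap_antidiagonal]
    rw [Finset.sum_map]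
    rfl
  rw [hswap, ← Finset.sum_sub_distrib]
  exact Submodule.sum_mem _ (fun x _ => bracket_mem _ _ _ (hv x.2))

lemma iter_coeff_mem (u : A[X]) (z : A) :
    ∀ n i, (((mulLeft k u - mulRight k u) ^ n) (C z)).coeff i ∈ lcs k A (n + 1)
  | 0 => by
      intro i
      rw [pow_zero, Module.End.one_apply, lcs_one]
      exact Submodule.mem_top
  | (n + 1) => by
      intro i
      rw [pow_succ', Module.End.mul_apply]
      simp only [LinearMap.sub_apply, mulLeft_apply, mulRight_apply]
      exact coeff_comm_mem u _ (iter_coeff_mem u z n) i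

lemma derivative_pow_nc (f : A[X]) :
    ∀ n : ℕ, derivative (f ^ n)
      = ∑ j ∈ Finset.range n, f ^ j * derivative f * f ^ (n - 1 - j)
  | 0 => by simp
  | (n + 1) => by
      have h : derivative (f ^ (n + 1))
          = derivative f * f ^ n + f * ∑ j ∈ Finset.range n,
            f ^ j * derivative f * f ^ (n - 1 - j) := by
        rw [pow_succ', derivative_mul, derivative_pow_nc f n]
      rw [h, Finset.mul_sum,
        Finset.sum_range_succ' (fun j => f ^ j * derivative f * f ^ (n + 1 - 1 - j)) n]
      have h0 : f ^ 0 * derivative f * f ^ (n + 1 - 1 - 0) = derivative f * f ^ n := by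
        simp
      rw [h0, add_comm]
      congr 1
      refine Finset.sum_congr rfl fun i _ => ?_
      have he : n + 1 - 1 - (i + 1) = n - 1 - i := by omega
      rw [he, ← mul_assoc, ← mul_assoc, ← pow_succ']

end MainAux

section Add

variable {k A : Type*} [Field k] [Ring A] [Algebra k A] {p : ℕ}

open LinearMap Polynomial Finset

lemma coeff_u_zero (a b : A) : (C a * X + C b : A[X]).coeff 0 = b := by simp

lemma coeff_u_one (a b : A) : (C a * X + C b : A[X]).coeff 1 = a := by simp

lemma coeff_u_ge (a b : A) (i : ℕ) (hi : 2 ≤ i) : (C a * X + C b : A[X]).coeff i = 0 := by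
  rw [coeff_add, coeff_C_mul, coeff_X, coeff_C]
  rw [if_neg (by omega), if_neg (by omega)]
  simp

lemma natDegree_u_le (a b : A) : (C a * X + C b : A[X]).natDegree ≤ 1 := by
  refine le_trans (natDegree_add_le _ _) ?_
  simp only [natDegree_C, max_le_iff]
  constructor
  · exact le_trans (natDegree_mul_le) (by simp [natDegree_X_le])
  · omega

lemma coeff_u_pow_zero (a b : A) : ∀ n : ℕ, ((C a * X + C b : A[X]) ^ n).coeff 0 = b ^ n
  | 0 => by simp
  | (n + 1) => by
      rw [pow_succ', Polynomial.mul_coeff_zero, coeff_u_zero, coeff_u_pow_zero a b n, pow_succ']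

lemma coeff_u_pow_top (a b : A) : ∀ n : ℕ, ((C a * X + C b : A[X]) ^ n).coeff n = a ^ n
  | 0 => by simp
  | (n + 1) => by
      rw [pow_succ', coeff_mul]
      rw [Finset.sum_eq_single (1, n)]
      · rw [coeff_u_one, coeff_u_pow_top a b n, pow_succ']
      · rintro ⟨i, j⟩ hmem hne
        rw [Finset.HasAntidiagonal.mem_antidiagonal] at hmem
        rcases Nat.lt_or_ge i 2 with hi | hi
        · interval_cases i
          · -- i = 0, j = n + 1 : coefficient beyond degree
            have hdeg : ((C a * X + C b : A[X]) ^ n).natDegree ≤ n := by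
              refine le_trans (natDegree_pow_le) ?_
              have := natDegree_u_le a b
              nlinarith [natDegree_u_le a b]
            have : ((C a * X + C b : A[X]) ^ n).coeff j = 0 := by
              apply coeff_eq_zero_of_natDegree_lt
              omega
            rw [this, mul_zero]
          · -- i = 1 forces j = n, contradiction with hne
            exfalso
            exact hne (by simp; omega)
        · rw [coeff_u_ge a b i hi, zero_mul]
      · intro hnotmem
        exfalso
        exact hnotmem (by rw [Finset.HasAntidiagonal.mem_antidiagonal]; omega)

lemma coeff_u_pow_high (a b : A) (n j : ℕ) (hj : n < j) :
    ((C a * X + C b : A[X]) ^ n).coeff j = 0 := by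
  apply coeff_eq_zero_of_natDegree_lt
  have : ((C a * X + C b : A[X]) ^ n).natDegree ≤ n := by
    refine le_trans (natDegree_pow_le) ?_
    nlinarith [natDegree_u_le a b]
  omega

lemma pow_add_eq (hp : p.Prime) (hp2 : 2 < p) [CharP k p]
    (hlcs : lcs k A p = ⊥) (a b : A) : (a + b) ^ p = a ^ p + b ^ p := by
  set u : A[X] := C a * X + C b with hu
  have hdu : derivative u = C a := by
    rw [hu, derivative_add, derivative_C, add_zero, derivative_C_mul_X]
  have hder : derivative (u ^ p)
      = ((mulLeft k u - mulRight k u) ^ (p - 1)) (C a) := by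
    rw [derivative_pow_nc u p, hdu, sum_conj_eq (k := k) (S := A[X]) hp hp2 u (C a)]
  have hder0 : derivative (u ^ p) = 0 := by
    rw [hder]
    ext i
    have hmem := iter_coeff_mem (k := k) u a (p - 1) i
    rw [(by omega : p - 1 + 1 = p), hlcs, Submodule.mem_bot] at hmem
    simpa using hmem
  have hcoeffmid : ∀ j, 0 < j → j < p → (u ^ p).coeff j = 0 := by
    intro j hj0 hjp
    obtain ⟨n, rfl⟩ : ∃ n, j = n + 1 := ⟨j - 1, by omega⟩
    have h1 : (derivative (u ^ p)).coeff n = 0 := by rw [hder0]; simp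
    rw [Polynomial.coeff_derivative] at h1
    have hne : ((n : k) + 1) ≠ 0 := by
      have : ((n + 1 : ℕ) : k) ≠ 0 := by
        rw [Ne, CharP.cast_eq_zero_iff k p]
        intro hdvd
        have := Nat.le_of_dvd (Nat.succ_pos n) hdvd
        omega
      push_cast at this
      exact this
    have hcast : ((n : A) + 1) = algebraMap k A ((n : k) + 1) := by
      rw [map_add, map_natCast, map_one]
    rw [hcast] at h1
    have h2 := congrArg (· * algebraMap k A (((n : k) + 1))⁻¹) h1
    simp only [zero_mul] at h2
    rw [mul_assoc, ← map_mul, mul_inv_cancel₀ hne, map_one, mul_one] at h2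
    exact h2
  have hform : u ^ p = C (b ^ p) + C (a ^ p) * X ^ p := by
    ext j
    rw [coeff_add, coeff_C, coeff_C_mul, coeff_X_pow]
    rcases eq_or_ne j 0 with rfl | hj0
    · rw [coeff_u_pow_zero a b p, if_pos rfl, if_neg (by omega), mul_zero, add_zero]
    rcases eq_or_ne j p with hjp | hjp
    · rw [hjp, coeff_u_pow_top a b p, if_neg (by omega : ¬ p = 0), if_pos rfl, mul_one,
        zero_add]
    rcases Nat.lt_or_ge j p with hjlt | hjge
    · rw [hcoeffmid j (Nat.pos_of_ne_zero hj0) hjlt, if_neg hj0, if_neg hjp,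
        mul_zero, add_zero]
    · rw [coeff_u_pow_high a b p j (by omega), if_neg hj0, if_neg hjp, mul_zero,
        add_zero]
  let ψ : A[X] →+* A := eval₂RingHom' (RingHom.id A) 1 (fun r => Commute.one_right ((RingHom.id A) r))
  have hpsiu : ψ u = a + b := by
    rw [hu]
    rw [map_add, map_mul]
    simp [ψ, eval₂RingHom']
  have h2 : ψ (u ^ p) = (a + b) ^ p := by rw [map_pow, hpsiu]
  have h3 : ψ (u ^ p) = b ^ p + a ^ p := by
    have hC : ∀ c : A, ψ (C c) = c := fun c => by simp [ψ, eval₂RingHom']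
    have hX : ψ X = 1 := by simp [ψ, eval₂RingHom']
    rw [hform, map_add, map_mul, hC, hC, map_pow, hX, one_pow, mul_one]
  rw [← h2, h3, add_comm]

end Add


/-- Let `A` be an associative algebra over a field `k` of characteristic `p > 2`,
with lower central series `A_(1) = A`, `A_(k) = [A, A_(k-1)]`.  If `A_(p) = 0`
and every element of `A_(2) = [A,A]` has vanishing `p`-th power, then
`(x*y)^p = x^p * y^p` for all `x, y ∈ A`. -/
theorem statement1 {k A : Type*} [Field k] [Ring A] [Algebra k A]
    {p : ℕ} (hp : p.Prime) (hp2 : 2 < p) [CharP k p]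
    (hlcs : lcs k A p = ⊥)
    (hA2 : ∀ c ∈ lcs k A 2, c ^ p = 0) :
    ∀ x y : A, (x * y) ^ p = x ^ p * y ^ p := by
  have hadd : ∀ a b : A, (a + b) ^ p = a ^ p + b ^ p := pow_add_eq hp hp2 hlcs
  have hlcs1 : lcs k A (p + 1) = ⊥ := by
    obtain ⟨m, hm⟩ : ∃ m, p = m + 2 := ⟨p - 2, by omega⟩
    rw [hm, show m + 2 + 1 = (m + 1) + 2 by ring, lcs_succ_succ]
    rw [Submodule.span_eq_bot]
    rintro z ⟨a, c, hc, rfl⟩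
    rw [show m + 1 + 1 = m + 2 by ring, ← hm, hlcs, Submodule.mem_bot] at hc
    rw [hc, mul_zero, zero_mul, sub_zero]
  have hcent : ∀ a y : A, a ^ p * y = y * a ^ p := by
    intro a y
    have h1 := iter_mem (k := k) a y p
    rw [hlcs1, Submodule.mem_bot, lr_pow_p (k := k) hp hp2 a y] at h1
    exact sub_eq_zero.mp h1
  have hsym : ∀ x y : A, (x * y) ^ p = (y * x) ^ p := by
    intro x y
    have hc : x * y - y * x ∈ lcs k A 2 := by
      rw [show (2 : ℕ) = 0 + 2 by ring, lcs_succ_succ]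
      exact Submodule.subset_span ⟨x, y, Submodule.mem_top, rfl⟩
    have h0 : (x * y - y * x) ^ p = 0 := hA2 _ hc
    have h1 : x * y = y * x + (x * y - y * x) := by abel
    rw [h1, hadd, h0, add_zero]
  intro x y
  have hsq : ∀ w : A, (w * w) ^ p = w ^ p * w ^ p := by
    intro w
    rw [← sq, ← pow_mul, mul_comm 2 p, pow_mul, sq]
  have e1 : ((x + y) * (x + y)) ^ p
      = (x * x) ^ p + ((x * y) ^ p + ((x * y) ^ p + (y * y) ^ p)) := by
    have hexp : (x + y) * (x + y) = x * x + (x * y + (y * x + y * y)) := by noncomm_ring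
    rw [hexp, hadd (x * x) _, hadd (x * y) _, hadd (y * x) (y * y), hsym y x]
  have e2 : ((x + y) * (x + y)) ^ p
      = (x * x) ^ p + (x ^ p * y ^ p + (x ^ p * y ^ p + (y * y) ^ p)) := by
    rw [hsq (x + y), hadd]
    rw [add_mul, mul_add, mul_add, hcent y (x ^ p)]
    rw [← hsq x, ← hsq y]
    abel
  have e3 : (x * y) ^ p + ((x * y) ^ p + (y * y) ^ p)
      = x ^ p * y ^ p + (x ^ p * y ^ p + (y * y) ^ p) := add_left_cancel (by rw [← e1, ← e2])
  have e4 : (x * y) ^ p + (x * y) ^ p = x ^ p * y ^ p + x ^ p * y ^ p := by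
    rw [← add_assoc, ← add_assoc] at e3
    exact add_right_cancel e3
  have h2ne : (2 : k) ≠ 0 := by
    have : ((2 : ℕ) : k) ≠ 0 := by
      rw [Ne, CharP.cast_eq_zero_iff k p]
      intro hdvd
      have := Nat.le_of_dvd (by norm_num) hdvd
      omega
    push_cast at this
    exact this
  have h2 : (2 : k) • ((x * y) ^ p) = (2 : k) • (x ^ p * y ^ p) := by
    rw [two_smul, two_smul]
    exact e4
  calc (x * y) ^ p = (2 : k)⁻¹ • ((2 : k) • ((x * y) ^ p)) := by
        rw [smul_smul, inv_mul_cancel₀ h2ne, one_smul]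
    _ = (2 : k)⁻¹ • ((2 : k) • (x ^ p * y ^ p)) := by rw [h2]
    _ = x ^ p * y ^ p := by rw [smul_smul, inv_mul_cancel₀ h2ne, one_smul]
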